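/- Counterexample to dV without global existence: The rule dV≥ fails for merely locally Lipschitz ODEs. There exists a locally Lipschitz (indeed polynomial) ODE x' = f(x) on ℝ², a polynomial p with ∇p·f ≥ ε > 0 everywhere where p < 0, and an initial state whose solution blows up in finite time before p reaches 0, so that p(φ(t)) < 0 for all t in the (finite) existence interval. -/

import Mathlib

open MvPolynomial

/-- Counterexample to dV without global existence: there is a polynomial ODE on
`ℝ²`, a polynomial `p`, and `ε > 0` with Lie derivative `≥ ε` wherever `p < 0`,
together with a right-maximal solution that blows up at a finite time `T` with
`p < 0` throughout its whole existence interval `[0,T)`. -/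
theorem dV_needs_global_existence :
    ∃ (F : Fin 2 → MvPolynomial (Fin 2) ℝ) (f : (Fin 2 → ℝ) → (Fin 2 → ℝ))
      (p : MvPolynomial (Fin 2) ℝ) (ε : ℝ) (T : ℝ) (φ : ℝ → (Fin 2 → ℝ)),
      f = (fun x i => eval x (F i)) ∧ 0 < ε ∧
      (∀ y : Fin 2 → ℝ, eval y p < 0 →
        ε ≤ ∑ i : Fin 2, eval y (pderiv i p) * f y i) ∧
      0 < T ∧
      (∀ t ∈ Set.Ico (0:ℝ) T, HasDerivAt φ (f (φ t)) t) ∧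
      (∀ (T' : ℝ) (ψ : ℝ → (Fin 2 → ℝ)), ψ 0 = φ 0 →
        (∀ t ∈ Set.Ico (0:ℝ) T', HasDerivAt ψ (f (ψ t)) t) → T' ≤ T) ∧
      (∀ t ∈ Set.Ico (0:ℝ) T, eval (φ t) p < 0) := by
  refine ⟨![X 0 * X 0, 1], fun x i => eval x (![X 0 * X 0, 1] i),
    X 1 - C 2, 1, 1, fun t => ![(1 - t)⁻¹, t], rfl, one_pos, ?_, one_pos, ?_, ?_, ?_⟩
  · intro y _
    simp [Fin.sum_univ_two]
  · intro t ht
    rw [hasDerivAt_pi]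
    intro i
    fin_cases i
    · have h1 : (1 : ℝ) - t ≠ 0 := by
        have := ht.2; intro h; nlinarith
      have : HasDerivAt (fun t : ℝ => (1 - t)⁻¹) (-(-1) / (1 - t) ^ 2) t :=
        ((hasDerivAt_id t).const_sub 1).inv h1
      refine this.congr_deriv ?_
      simp
      field_simp
    · exact (hasDerivAt_id' t).congr_deriv (by simp)
  · intro T' ψ h0 hψ
    by_contra hT
    push_neg at hT
    set u : ℝ → ℝ := fun t => ψ t 0 with hu_def
    have hu : ∀ t ∈ Set.Icc (0:ℝ) 1, HasDerivAt u ((u t) ^ 2) t := by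
      intro t ht
      have htT : t ∈ Set.Ico (0:ℝ) T' := ⟨ht.1, lt_of_le_of_lt ht.2 hT⟩
      have := (hasDerivAt_pi.mp (hψ t htT)) 0
      simpa [hu_def, sq] using this
    have hu0 : u 0 = 1 := by
      simp [hu_def, h0]
    -- u is monotone on [0,1], hence u t ≥ 1
    have hmono : MonotoneOn u (Set.Icc (0:ℝ) 1) := by
      apply monotoneOn_of_deriv_nonneg (convex_Icc 0 1)
      · exact fun t ht => (hu t ht).continuousAt.continuousWithinAt
      · intro t ht
        rw [interior_Icc] at ht
        exact (hu t ⟨ht.1.le, ht.2.le⟩).differentiableAt.differentiableWithinAt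
      · intro t ht
        rw [interior_Icc] at ht
        rw [(hu t ⟨ht.1.le, ht.2.le⟩).deriv]
        positivity
    have hge : ∀ t ∈ Set.Icc (0:ℝ) 1, 1 ≤ u t := by
      intro t ht
      have := hmono (Set.left_mem_Icc.mpr zero_le_one) ht ht.1
      rwa [hu0] at this
    -- w t = (u t)⁻¹ + t has zero derivative on [0,1]
    set w : ℝ → ℝ := fun t => (u t)⁻¹ + t with hw_def
    have hw : ∀ t ∈ Set.Icc (0:ℝ) 1, HasDerivAt w 0 t := by
      intro t ht
      have hne : u t ≠ 0 := by have := hge t ht; intro h; rw [h] at this; linarith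
      have h1 : HasDerivAt (fun s => (u s)⁻¹) (-(u t ^ 2) / u t ^ 2) t :=
        (hu t ht).inv hne
      have := h1.add (hasDerivAt_id t)
      refine this.congr_deriv ?_
      field_simp
      ring
    have hconst : w 1 = w 0 := by
      have := constant_of_has_deriv_right_zero
        (f := w) (a := (0:ℝ)) (b := 1)
        (fun t ht => (hw t ht).continuousAt.continuousWithinAt)
        (fun t ht => ((hw t ⟨ht.1, ht.2.le⟩).hasDerivWithinAt))
      exact this 1 (Set.right_mem_Icc.mpr zero_le_one)
    have hu1 : 1 ≤ u 1 := hge 1 (Set.right_mem_Icc.mpr zero_le_one)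
    have : (u 1)⁻¹ + 1 = (u 0)⁻¹ + 0 := hconst
    rw [hu0] at this
    have hpos : 0 < (u 1)⁻¹ := inv_pos.mpr (lt_of_lt_of_le zero_lt_one hu1)
    norm_num at this
    linarith
  · intro t ht
    have := ht.2
    simp [Matrix.cons_val_one]
    linarith
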